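/- Let (A, ρ, IB) and (B, η, IB′) be complete local contact algebras and ψ : A → B a function satisfying (DLC2) and (DLC4). Then for every a ∈ A, ⨆{ψ(b) | b ∈ IB, b ≪ρ a} = ⨆{ψ(b) | b ∈ A, b ≪_{Cρ} a}, where Cρ is the Alexandroff extension of ρ and b ≪_{Cρ} a means ¬(b Cρ a*). -/

import Mathlib

/-- The axioms (C1)-(C4) of a contact relation on a Boolean algebra. -/
def ContactRel {B : Type*} [BooleanAlgebra B] (C : B → B → Prop) : Prop :=
  (∀ a : B, a ≠ ⊥ → C a a) ∧
  (∀ a b : B, C a b → a ≠ ⊥ ∧ b ≠ ⊥) ∧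
  (∀ a b : B, C a b → C b a) ∧
  (∀ a b c : B, C a (b ⊔ c) ↔ C a b ∨ C a c)

/-- A normal contact algebra: (C1)-(C4) together with (C5) and (C6). -/
def NormalContact {B : Type*} [BooleanAlgebra B] (C : B → B → Prop) : Prop :=
  ContactRel C ∧
  (∀ a b : B, ¬ C a b → ∃ c : B, ¬ C a c ∧ ¬ C b cᶜ) ∧
  (∀ a : B, a ≠ ⊤ → ∃ b : B, b ≠ ⊥ ∧ ¬ C b a)

/-- A cluster in a contact algebra `(B, C)`: conditions (K1), (K2), (K3). -/
def IsCACluster {B : Type*} [BooleanAlgebra B] (C : B → B → Prop) (σ : Set B) : Prop :=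
  σ.Nonempty ∧
  (∀ a ∈ σ, ∀ b ∈ σ, C a b) ∧
  (∀ a b : B, a ⊔ b ∈ σ → a ∈ σ ∨ b ∈ σ) ∧
  (∀ a : B, (∀ b ∈ σ, C a b) → a ∈ σ)

/-- An ideal of a Boolean algebra (nonempty, downward closed, closed under joins). -/
def IsBAIdeal {B : Type*} [BooleanAlgebra B] (I : Set B) : Prop :=
  I.Nonempty ∧ (∀ a ∈ I, ∀ b : B, b ≤ a → b ∈ I) ∧ (∀ a ∈ I, ∀ b ∈ I, a ⊔ b ∈ I)

/-- A local contact algebra `(B, ρ, IB)`: a contact relation, an ideal of bounded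
elements, and the axioms (BC1), (BC2), (BC3).  Here `a ≪ρ b` is `¬ ρ a bᶜ`. -/
def IsLCA {B : Type*} [BooleanAlgebra B] (ρ : B → B → Prop) (IB : Set B) : Prop :=
  ContactRel ρ ∧ IsBAIdeal IB ∧
  (∀ a ∈ IB, ∀ c : B, ¬ ρ a cᶜ → ∃ b ∈ IB, ¬ ρ a bᶜ ∧ ¬ ρ b cᶜ) ∧
  (∀ a b : B, ρ a b → ∃ c ∈ IB, ρ a (c ⊓ b)) ∧
  (∀ a : B, a ≠ ⊥ → ∃ b ∈ IB, b ≠ ⊥ ∧ ¬ ρ b aᶜ)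

/-- The Alexandroff extension `Cρ` of `ρ` relative to the LCA `(B, ρ, IB)`. -/
def AlexExt {B : Type*} [BooleanAlgebra B] (ρ : B → B → Prop) (IB : Set B)
    (a b : B) : Prop :=
  ρ a b ∨ (a ∉ IB ∧ b ∉ IB)

/-- A δ-ideal of an LCA `(B, ρ, IB)`. -/
def IsDeltaIdeal {B : Type*} [BooleanAlgebra B] (ρ : B → B → Prop) (IB I : Set B) : Prop :=
  IsBAIdeal I ∧ I ⊆ IB ∧ ∀ a ∈ I, ∃ b ∈ I, ¬ ρ a bᶜ

/-- For complete LCAs (A, ρ, IB), (B, η, IB') and ψ : A → B satisfying (DLC2)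
and (DLC4), for every a ∈ A one has
⨆{ψ(b) | b ∈ IB, b ≪ρ a} = ⨆{ψ(b) | b ≪_{Cρ} a}, where Cρ is the Alexandroff
extension of ρ. -/

lemma contact_mono' {X : Type*} [BooleanAlgebra X] {C : X → X → Prop}
    (hC : ContactRel C)
    {x y x' y' : X} (h : C x y) (hx : x ≤ x') (hy : y ≤ y') :
    C x' y' := by
  obtain ⟨c1, c2, c3, c4⟩ := hC
  have h1 : C x y' := by
    have := (c4 x y y').mpr (Or.inl h)
    rwa [sup_eq_right.mpr hy] at this
  have h2 : C y' x' := by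
    have := (c4 y' x x').mpr (Or.inl (c3 _ _ h1))
    rwa [sup_eq_right.mpr hx] at this
  exact c3 _ _ h2

lemma not_contact_le' {X : Type*} [BooleanAlgebra X] {C : X → X → Prop}
    (hC : ContactRel C) {x y : X} (h : ¬ C x yᶜ) : x ≤ y := by
  by_contra hle
  have hne : x ⊓ yᶜ ≠ ⊥ := by
    intro hb
    rw [← sdiff_eq] at hb
    exact hle (sdiff_eq_bot_iff.mp hb)
  exact h (contact_mono' hC (hC.1 _ hne) inf_le_left inf_le_right)

theorem stmt_12 {A : Type*} {B : Type*}
    [CompleteBooleanAlgebra A] [CompleteBooleanAlgebra B]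
    (ρ : A → A → Prop) (IB : Set A) (η : B → B → Prop) (IB' : Set B)
    (hA : IsLCA ρ IB) (hB : IsLCA η IB') (ψ : A → B)
    (dlc2 : ∀ a b : A, ψ (a ⊓ b) = ψ a ⊓ ψ b)
    (dlc4 : ∀ b ∈ IB', ∃ a ∈ IB, b ≤ ψ a) :
    ∀ a : A, sSup (ψ '' {b : A | b ∈ IB ∧ ¬ ρ b aᶜ}) =
      sSup (ψ '' {b : A | ¬ AlexExt ρ IB b aᶜ}) := by
  obtain ⟨hCA, ⟨_, hdown, _⟩, _, _, _⟩ := hA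
  obtain ⟨hCB, _, _, _, bc3B⟩ := hB
  intro a
  apply le_antisymm
  · apply sSup_le_sSup
    apply Set.image_mono
    rintro b ⟨hbIB, hbr⟩
    intro h
    rcases h with h | ⟨h1, _⟩
    · exact hbr h
    · exact h1 hbIB
  · apply sSup_le
    rintro x ⟨b, hb, rfl⟩
    have hbr : ¬ ρ b aᶜ := fun h => hb (Or.inl h)
    -- ψ b is the sup of bounded elements below it
    set S : Set B := {c | c ∈ IB' ∧ c ≤ ψ b} with hS
    have hsup : ψ b ≤ sSup S := by
      by_contra hle
      have hne : ψ b ⊓ (sSup S)ᶜ ≠ ⊥ := by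
        intro hbot
        rw [← sdiff_eq] at hbot
        exact hle (sdiff_eq_bot_iff.mp hbot)
      obtain ⟨d, hdIB, hdne, hdr⟩ := bc3B _ hne
      have hdle : d ≤ ψ b ⊓ (sSup S)ᶜ := not_contact_le' hCB hdr
      have hdS : d ≤ sSup S := le_sSup ⟨hdIB, hdle.trans inf_le_left⟩
      have : d ≤ ⊥ := by
        have := le_inf hdS (hdle.trans inf_le_right)
        rwa [inf_compl_eq_bot] at this
      exact hdne (le_bot_iff.mp this)
    refine hsup.trans (sSup_le ?_)
    rintro c ⟨hcIB, hcle⟩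
    obtain ⟨a', ha'IB, hca'⟩ := dlc4 c hcIB
    have hkey : c ≤ ψ (b ⊓ a') := by
      rw [dlc2]
      exact le_inf hcle hca'
    refine hkey.trans (le_sSup ?_)
    refine ⟨b ⊓ a', ⟨hdown a' ha'IB _ inf_le_right, ?_⟩, rfl⟩
    intro h
    exact hbr (contact_mono' hCA h inf_le_left le_rfl)
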